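/- Let (P_n)_{n≥0} be polynomials in ℂ[x] with each P_n monic of degree n, P_0 = 1 and P_n(0) = 0 for n ≥ 1. Let ℂ⟨X,Y⟩ be the free (noncommutative) algebra on two generators X, Y, and for a polynomial p ∈ ℂ[x] and W ∈ ℂ⟨X,Y⟩ let p(W) denote the image of p under the algebra homomorphism sending x to W. Then the following are equivalent: (i) for every n ≥ 1, P_n(X + Y) = Σ_{k=1}^n Σ_{(i_1,…,i_k)} [ P_{i_1}(X) P_{i_2}(Y) P_{i_3}(X) P_{i_4}(Y) ⋯ + P_{i_1}(Y) P_{i_2}(X) P_{i_3}(Y) P_{i_4}(X) ⋯ ], where the inner sum is over all compositions (i_1,…,i_k) of n into k positive parts and in each product the arguments alternate between X and Y; (ii) there exists u ∈ 𝒫₀,₁ such that Σ_{n≥0} P_n(x) z^n = Σ_{k≥0} x^k u(z)^k in ℂ[x][[z]] (i.e. the generating function equals 1/(1 − u(z)x)). -/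

import Mathlib

/-- The alternating product `P_{i_1}(W) P_{i_2}(V) P_{i_3}(W) ⋯` over the blocks
`(i_1, …, i_k)` of a composition `c` of `n`, with arguments alternating between
`W` and `V`, in the free algebra `ℂ⟨X,Y⟩`. -/
noncomputable def altProd (P : ℕ → Polynomial ℂ) {n : ℕ} (c : Composition n)
    (W V : FreeAlgebra ℂ Bool) : FreeAlgebra ℂ Bool :=
  (List.ofFn fun j : Fin c.length =>
    Polynomial.aeval (if (j : ℕ) % 2 = 0 then W else V) (P (c.blocksFun j))).prod

open Polynomial PowerSeries Finset


/-- Finset of lists of positive integers with sum `n`. -/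
def compL : ℕ → Finset (List ℕ)
  | 0 => {[]}
  | (n+1) => (Finset.range (n+1)).biUnion fun j => (compL (n - j)).image (fun l => (j+1) :: l)
  decreasing_by exact Nat.lt_succ_of_le (Nat.sub_le n j)

lemma mem_compL : ∀ (n : ℕ) (l : List ℕ), l ∈ compL n ↔ l.sum = n ∧ ∀ i ∈ l, 0 < i := by
  intro n
  induction n using Nat.strong_induction_on with
  | _ n ih =>
    match n with
    | 0 =>
      intro l
      simp only [compL, Finset.mem_singleton]
      constructor
      · rintro rfl; simp
      · rintro ⟨hs, hp⟩
        cases l with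
        | nil => rfl
        | cons a t =>
          exfalso
          have := hp a (by simp)
          simp at hs; omega
    | (n+1) =>
      intro l
      rw [compL]
      simp only [Finset.mem_biUnion, Finset.mem_range, Finset.mem_image]
      constructor
      · rintro ⟨j, hj, l', hl', rfl⟩
        obtain ⟨hs, hp⟩ := (ih (n - j) (by omega) l').1 hl'
        constructor
        · simp [hs]; omega
        · intro i hi
          rcases List.mem_cons.1 hi with rfl | h
          · omega
          · exact hp i h
      · rintro ⟨hs, hp⟩
        cases l with
        | nil => simp at hs
        | cons a t =>
          have ha : 0 < a := hp a (by simp)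
          simp only [List.sum_cons] at hs
          refine ⟨a - 1, by omega, t, ?_, by congr 1; omega⟩
          refine ((ih (n - (a-1)) (by omega) t).2 ⟨by omega, fun i hi => hp i (by simp [hi])⟩)

lemma sum_compL_succ {M : Type*} [AddCommMonoid M] (g : List ℕ → M) (n : ℕ) :
    ∑ l ∈ compL (n+1), g l = ∑ j ∈ Finset.range (n+1), ∑ l ∈ compL (n - j), g ((j+1) :: l) := by
  rw [compL]
  rw [Finset.sum_biUnion]
  · refine Finset.sum_congr rfl fun j _ => ?_
    rw [Finset.sum_image]
    intro a _ b _ h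
    exact (List.cons.injEq _ _ _ _ ▸ h).2
  · intro j₁ h₁ j₂ h₂ hne
    simp only [Finset.disjoint_left]
    rintro s hs₁ hs₂
    simp only [Finset.mem_image] at hs₁ hs₂
    obtain ⟨l₁, _, rfl⟩ := hs₁
    obtain ⟨l₂, _, h⟩ := hs₂
    exact hne (by injection h.symm with h1 h2; omega)

lemma sum_composition {M : Type*} [AddCommMonoid M] (g : List ℕ → M) (n : ℕ) :
    ∑ c : Composition n, g c.blocks = ∑ l ∈ compL n, g l := by
  refine Finset.sum_bij' (fun c _ => c.blocks)
    (fun l hl => ⟨l, fun hi => ((mem_compL n l).1 hl).2 _ hi, ((mem_compL n l).1 hl).1⟩)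
    ?_ ?_ ?_ ?_ ?_
  · intro c _
    exact (mem_compL n c.blocks).2 ⟨c.blocks_sum, fun i hi => c.blocks_pos hi⟩
  · intro l hl; exact Finset.mem_univ _
  · intro c _; rfl
  · intro l hl; rfl
  · intro c _; rfl

/-- Alternating product of `P i (W)` over a list, swapping `W` and `V`. -/
noncomputable def altList (P : ℕ → Polynomial ℂ) {A : Type*} [Semiring A] [Algebra ℂ A] :
    List ℕ → A → A → A
  | [], _, _ => 1
  | (i :: l), W, V => Polynomial.aeval W (P i) * altList P l V W

lemma ofFn_prod_eq_altList (P : ℕ → Polynomial ℂ) {A : Type*} [Semiring A] [Algebra ℂ A] :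
    ∀ (l : List ℕ) (W V : A),
      (List.ofFn fun j : Fin l.length =>
        Polynomial.aeval (if (j : ℕ) % 2 = 0 then W else V) (P (l.get j))).prod
        = altList P l W V := by
  intro l
  induction l with
  | nil => intro W V; simp [altList]
  | cons i t ih =>
    intro W V
    rw [List.ofFn_succ]
    simp only [List.prod_cons, Fin.val_zero, Nat.zero_mod, if_pos rfl, List.get_cons_zero]
    rw [altList]
    congr 1
    rw [← ih V W]
    refine congrArg List.prod (congrArg List.ofFn ?_)
    funext j
    have : ((j.succ : Fin (i :: t).length) : ℕ) % 2 = if (j : ℕ) % 2 = 0 then 1 else 0 := by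
      simp only [Fin.val_succ]
      rcases Nat.mod_two_eq_zero_or_one (j : ℕ) with h | h <;> simp [h] <;> omega
    rw [this]
    rcases Nat.mod_two_eq_zero_or_one (j : ℕ) with h | h <;> simp [h]

lemma altProd_eq_altList (P : ℕ → Polynomial ℂ) {n : ℕ} (c : Composition n)
    (W V : FreeAlgebra ℂ Bool) : altProd P c W V = altList P c.blocks W V :=
  ofFn_prod_eq_altList P c.blocks W V

section PS
variable {K : Type*} [CommRing K]

lemma coeff_pow_eq_zero_of_lt {u : PowerSeries K} (h0 : PowerSeries.constantCoeff u = 0)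
    {m k : ℕ} (h : m < k) : PowerSeries.coeff m (u ^ k) = 0 := by
  induction k generalizing m with
  | zero => omega
  | succ k ih =>
    rw [pow_succ', PowerSeries.coeff_mul, Finset.Nat.sum_antidiagonal_eq_sum_range_succ_mk]
    refine Finset.sum_eq_zero fun a ha => ?_
    have ha' := Finset.mem_range.1 ha
    rcases Nat.eq_zero_or_pos a with rfl | hpos
    · simp [PowerSeries.coeff_zero_eq_constantCoeff, h0]
    · rw [ih (by omega), mul_zero]

lemma coeff_succ_pow {u : PowerSeries K} (h0 : PowerSeries.constantCoeff u = 0)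
    (n k : ℕ) :
    PowerSeries.coeff n (u ^ (k+1)) =
      ∑ j ∈ Finset.range n, PowerSeries.coeff (j+1) u *
        PowerSeries.coeff (n - (j+1)) (u ^ k) := by
  rw [pow_succ', PowerSeries.coeff_mul, Finset.Nat.sum_antidiagonal_eq_sum_range_succ_mk,
    Finset.sum_range_succ']
  simp only [PowerSeries.coeff_zero_eq_constantCoeff, h0, zero_mul, add_zero]

lemma coeff_pow_compL {u : PowerSeries K} (h0 : PowerSeries.constantCoeff u = 0) :
    ∀ (n k : ℕ), PowerSeries.coeff n (u ^ k) =
      ∑ l ∈ compL n, if l.length = k then (l.map fun i => PowerSeries.coeff i u).prod else 0 := by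
  intro n
  induction n using Nat.strong_induction_on with
  | _ n ih =>
    intro k
    match n, k with
    | 0, 0 => simp [compL]
    | 0, (k+1) =>
      simp [compL, PowerSeries.coeff_zero_eq_constantCoeff, h0]
    | (n+1), 0 =>
      rw [pow_zero, PowerSeries.coeff_one]
      rw [Finset.sum_eq_zero]
      · simp
      intro l hl
      obtain ⟨hs, hp⟩ := (mem_compL _ l).1 hl
      have : l ≠ [] := by rintro rfl; simp at hs
      rw [if_neg]
      simpa using this
    | (n+1), (k+1) =>
      rw [coeff_succ_pow h0 (n+1) k, sum_compL_succ]
      refine Finset.sum_congr rfl fun j hj => ?_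
      rw [Finset.mem_range] at hj
      have : n + 1 - (j+1) = n - j := by omega
      rw [this, ih (n - j) (by omega) k, Finset.mul_sum]
      refine Finset.sum_congr rfl fun l hl => ?_
      by_cases h : l.length = k
      · simp [h]
      · simp [h]

end PS

section R1
variable {A : Type*} [Ring A] [Algebra ℂ A]

lemma aeval_P_eq (P : ℕ → Polynomial ℂ) (u : PowerSeries ℂ)
    (hcoeff : ∀ n : ℕ, P n = ∑ k ∈ Finset.range (n + 1),
        Polynomial.C (PowerSeries.coeff n (u ^ k)) * Polynomial.X ^ k)
    (W : A) (m : ℕ) :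
    Polynomial.aeval W (P m) =
      ∑ k ∈ Finset.range (m+1), algebraMap ℂ A (PowerSeries.coeff m (u ^ k)) * W ^ k := by
  rw [hcoeff m, map_sum]
  refine Finset.sum_congr rfl fun k _ => ?_
  simp [Polynomial.aeval_C, map_pow]

lemma aeval_P_eq' (P : ℕ → Polynomial ℂ) (u : PowerSeries ℂ)
    (h0 : PowerSeries.constantCoeff u = 0)
    (hcoeff : ∀ n : ℕ, P n = ∑ k ∈ Finset.range (n + 1),
        Polynomial.C (PowerSeries.coeff n (u ^ k)) * Polynomial.X ^ k)
    (W : A) {m N : ℕ} (hm : m ≤ N) :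
    Polynomial.aeval W (P m) =
      ∑ k ∈ Finset.range (N+1), algebraMap ℂ A (PowerSeries.coeff m (u ^ k)) * W ^ k := by
  rw [aeval_P_eq P u hcoeff W m]
  refine Finset.sum_subset ?_ ?_
  · intro k hk; rw [Finset.mem_range] at *; omega
  · intro k _ hk
    rw [Finset.mem_range, not_lt] at hk
    rw [coeff_pow_eq_zero_of_lt h0 (by omega), map_zero, zero_mul]

lemma R1 (P : ℕ → Polynomial ℂ) (u : PowerSeries ℂ)
    (h0 : PowerSeries.constantCoeff u = 0)
    (hcoeff : ∀ n : ℕ, P n = ∑ k ∈ Finset.range (n + 1),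
        Polynomial.C (PowerSeries.coeff n (u ^ k)) * Polynomial.X ^ k)
    (W : A) (n : ℕ) :
    Polynomial.aeval W (P n) = (if n = 0 then 1 else 0) +
      ∑ p ∈ Finset.HasAntidiagonal.antidiagonal n,
        algebraMap ℂ A (PowerSeries.coeff p.1 u) * W * Polynomial.aeval W (P p.2) := by
  rw [Finset.Nat.sum_antidiagonal_eq_sum_range_succ_mk]
  have key : ∀ j ∈ Finset.range (n+1),
      algebraMap ℂ A (PowerSeries.coeff j u) * W * Polynomial.aeval W (P (n - j)) =
      ∑ k ∈ Finset.range (n+1),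
        algebraMap ℂ A (PowerSeries.coeff j u * PowerSeries.coeff (n-j) (u ^ k)) * W ^ (k+1) := by
    intro j hj
    rw [Finset.mem_range] at hj
    rw [aeval_P_eq' P u h0 hcoeff W (show n - j ≤ n by omega), Finset.mul_sum]
    refine Finset.sum_congr rfl fun k _ => ?_
    rw [map_mul]
    have hc : W * algebraMap ℂ A (PowerSeries.coeff (n-j) (u ^ k)) =
        algebraMap ℂ A (PowerSeries.coeff (n-j) (u ^ k)) * W := (Algebra.commutes _ _).symm
    rw [mul_assoc, ← mul_assoc W, hc, mul_assoc, ← pow_succ', ← mul_assoc]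
  rw [Finset.sum_congr rfl key, Finset.sum_comm]
  have inner : ∀ k, ∑ j ∈ Finset.range (n+1),
      algebraMap ℂ A (PowerSeries.coeff j u * PowerSeries.coeff (n-j) (u ^ k)) * W ^ (k+1) =
      algebraMap ℂ A (PowerSeries.coeff n (u ^ (k+1))) * W ^ (k+1) := by
    intro k
    rw [← Finset.sum_mul, ← map_sum]
    congr 2
    rw [pow_succ', PowerSeries.coeff_mul, Finset.Nat.sum_antidiagonal_eq_sum_range_succ_mk]
  rw [Finset.sum_congr rfl (fun k _ => inner k)]
  rw [aeval_P_eq P u hcoeff W n, Finset.sum_range_succ' (fun k =>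
    algebraMap ℂ A (PowerSeries.coeff n (u ^ k)) * W ^ k) n]
  rw [Finset.sum_range_succ]
  rw [coeff_pow_eq_zero_of_lt h0 (Nat.lt_succ_self n), map_zero, zero_mul, add_zero]
  rw [pow_zero, PowerSeries.coeff_one, add_comm]
  congr 1
  split <;> simp
end R1

section Deriv
variable {S : Type*} [Ring S]

lemma ps_unique {V D : PowerSeries S} (hV : PowerSeries.constantCoeff V = 0)
    (h : D = V * D) : D = 0 := by
  ext n
  rw [map_zero]
  induction n using Nat.strong_induction_on with
  | _ n ih =>
    conv_lhs => rw [h]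
    rw [PowerSeries.coeff_mul, Finset.Nat.sum_antidiagonal_eq_sum_range_succ_mk]
    refine Finset.sum_eq_zero fun a ha => ?_
    have ha' := Finset.mem_range.1 ha
    rcases Nat.eq_zero_or_pos a with rfl | hpos
    · rw [PowerSeries.coeff_zero_eq_constantCoeff, hV, zero_mul]
    · rw [ih (n - a) (by omega), mul_zero]

lemma deriv_algebra (FA FB FXY SA SB UX UY : PowerSeries S)
    (hA : FA = 1 + UX * FA) (hB : FB = 1 + UY * FB) (hXY : FXY = 1 + (UX + UY) * FXY)
    (hSA : SA = 1 + (FA - 1) * SB) (hSB : SB = 1 + (FB - 1) * SA)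
    (hU : PowerSeries.constantCoeff (UX + UY) = 0) :
    FXY = SA + SB - 1 := by
  have hT1 : SA + SB - 1 = FA * SB := by
    nth_rewrite 1 [hSA]
    noncomm_ring
  have hT2 : SA + SB - 1 = FB * SA := by
    nth_rewrite 1 [hSB]
    noncomm_ring
  have hA' : FA - 1 = UX * FA := by nth_rewrite 1 [hA]; noncomm_ring
  have hB' : FB - 1 = UY * FB := by nth_rewrite 1 [hB]; noncomm_ring
  have hSA' : SA - 1 = (FA - 1) * SB := by nth_rewrite 1 [hSA]; noncomm_ring
  have hSB' : SB - 1 = (FB - 1) * SA := by nth_rewrite 1 [hSB]; noncomm_ring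
  have h3 : SA - 1 = UX * (SA + SB - 1) := by
    rw [hSA', hA', mul_assoc, ← hT1]
  have h4 : SB - 1 = UY * (SA + SB - 1) := by
    rw [hSB', hB', mul_assoc, ← hT2]
  have h5 : SA + SB - 1 = 1 + (UX + UY) * (SA + SB - 1) := by
    have e : SA + SB - 1 = 1 + (SA - 1) + (SB - 1) := by noncomm_ring
    nth_rewrite 1 [e, h3, h4]
    noncomm_ring
  have hD : FXY - (SA + SB - 1) = (UX + UY) * (FXY - (SA + SB - 1)) := by
    nth_rewrite 1 [hXY]
    nth_rewrite 1 [h5]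
    noncomm_ring
  exact sub_eq_zero.mp (ps_unique hU hD)
end Deriv

section Dir2

local notation "R" => FreeAlgebra ℂ Bool
noncomputable def Xg : FreeAlgebra ℂ Bool := FreeAlgebra.ι ℂ false
noncomputable def Yg : FreeAlgebra ℂ Bool := FreeAlgebra.ι ℂ true

noncomputable def Ups (u : PowerSeries ℂ) (W : R) : PowerSeries R :=
  PowerSeries.map (algebraMap ℂ R) u * PowerSeries.C W

lemma coeff_Ups (u : PowerSeries ℂ) (W : R) (a : ℕ) :
    PowerSeries.coeff a (Ups u W) = algebraMap ℂ R (PowerSeries.coeff a u) * W := by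
  rw [Ups, PowerSeries.coeff_mul_C, PowerSeries.coeff_map]

lemma constantCoeff_Ups (u : PowerSeries ℂ) (h0 : PowerSeries.constantCoeff u = 0) (W : R) :
    PowerSeries.constantCoeff (Ups u W) = 0 := by
  have := coeff_Ups u W 0
  rw [PowerSeries.coeff_zero_eq_constantCoeff] at this
  rw [this, PowerSeries.coeff_zero_eq_constantCoeff, h0, map_zero, zero_mul]

noncomputable def Fps (P : ℕ → Polynomial ℂ) (W : R) : PowerSeries R :=
  PowerSeries.mk fun n => Polynomial.aeval W (P n)

lemma hFps (P : ℕ → Polynomial ℂ) (u : PowerSeries ℂ)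
    (h0 : PowerSeries.constantCoeff u = 0)
    (hcoeff : ∀ n : ℕ, P n = ∑ k ∈ Finset.range (n + 1),
        Polynomial.C (PowerSeries.coeff n (u ^ k)) * Polynomial.X ^ k)
    (W : R) : Fps P W = 1 + Ups u W * Fps P W := by
  ext n
  rw [Fps, PowerSeries.coeff_mk, map_add, PowerSeries.coeff_one, PowerSeries.coeff_mul]
  rw [R1 P u h0 hcoeff W n]
  congr 1
  refine Finset.sum_congr rfl fun p _ => ?_
  rw [coeff_Ups, PowerSeries.coeff_mk]

noncomputable def SAps (P : ℕ → Polynomial ℂ) (W V : R) : PowerSeries R :=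
  PowerSeries.mk fun n => ∑ l ∈ compL n, altList P l W V

lemma hSAps (P : ℕ → Polynomial ℂ) (hP0 : P 0 = 1) (W V : R) :
    SAps P W V = 1 + (Fps P W - 1) * SAps P V W := by
  ext n
  rw [SAps, PowerSeries.coeff_mk, map_add, PowerSeries.coeff_one, PowerSeries.coeff_mul]
  have cF : ∀ a : ℕ, PowerSeries.coeff a (Fps P W - 1) =
      Polynomial.aeval W (P a) - (if a = 0 then 1 else 0) := by
    intro a
    rw [map_sub, Fps, PowerSeries.coeff_mk, PowerSeries.coeff_one]
  cases n with
  | zero =>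
    simp only [compL]
    rw [Finset.sum_singleton]
    rw [Finset.Nat.antidiagonal_zero, Finset.sum_singleton, cF 0, if_pos rfl, hP0]
    simp [altList]
  | succ n =>
    rw [sum_compL_succ (fun l => altList P l W V) n, if_neg (Nat.succ_ne_zero n), zero_add]
    rw [Finset.Nat.sum_antidiagonal_eq_sum_range_succ_mk,
      Finset.sum_range_succ' (fun a => PowerSeries.coeff a (Fps P W - 1) *
        PowerSeries.coeff ((a, n + 1 - a).2) (SAps P V W)) (n+1)]
    rw [cF 0, if_pos rfl, hP0]
    simp only [map_one, sub_self, zero_mul, add_zero]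
    refine Finset.sum_congr rfl fun j hj => ?_
    rw [cF (j+1), if_neg (Nat.succ_ne_zero j), sub_zero]
    have : n + 1 - (j + 1) = n - j := by omega
    rw [this, SAps, PowerSeries.coeff_mk, Finset.mul_sum]
    refine Finset.sum_congr rfl fun l _ => ?_
    rw [altList]

lemma dir2 (P : ℕ → Polynomial ℂ) (hP0 : P 0 = 1) (u : PowerSeries ℂ)
    (h0 : PowerSeries.constantCoeff u = 0)
    (hcoeff : ∀ n : ℕ, P n = ∑ k ∈ Finset.range (n + 1),
        Polynomial.C (PowerSeries.coeff n (u ^ k)) * Polynomial.X ^ k)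
    (n : ℕ) (hn : 1 ≤ n) :
    Polynomial.aeval (Xg + Yg) (P n) =
      ∑ c : Composition n, (altProd P c Xg Yg + altProd P c Yg Xg) := by
  have hmain : Fps P (Xg + Yg) = SAps P Xg Yg + SAps P Yg Xg - 1 := by
    refine deriv_algebra (Fps P Xg) (Fps P Yg) (Fps P (Xg + Yg)) (SAps P Xg Yg) (SAps P Yg Xg)
      (Ups u Xg) (Ups u Yg) (hFps P u h0 hcoeff Xg) (hFps P u h0 hcoeff Yg) ?_
      (hSAps P hP0 Xg Yg) (hSAps P hP0 Yg Xg) ?_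
    · have : Ups u Xg + Ups u Yg = Ups u (Xg + Yg) := by
        rw [Ups, Ups, Ups, map_add, mul_add]
      rw [this]
      exact hFps P u h0 hcoeff (Xg + Yg)
    · rw [map_add, constantCoeff_Ups u h0, constantCoeff_Ups u h0, add_zero]
  have := congrArg (PowerSeries.coeff n) hmain
  rw [Fps, PowerSeries.coeff_mk, map_sub, map_add, PowerSeries.coeff_one,
    if_neg (by omega : ¬ n = 0), sub_zero, SAps, SAps, PowerSeries.coeff_mk,
    PowerSeries.coeff_mk] at this
  rw [this, Finset.sum_add_distrib]
  congr 1
  · rw [← sum_composition (fun l => altList P l Xg Yg) n]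
    exact Finset.sum_congr rfl fun c _ => (altProd_eq_altList P c Xg Yg).symm
  · rw [← sum_composition (fun l => altList P l Yg Xg) n]
    exact Finset.sum_congr rfl fun c _ => (altProd_eq_altList P c Yg Xg).symm

section Mat

/-- Partial shift matrix: ones on the superdiagonal at rows `i` with `i % 2 = p`. -/
def stepM (m p : ℕ) : Matrix (Fin (m+1)) (Fin (m+1)) ℂ :=
  Matrix.of fun i j => if (j:ℕ) = (i:ℕ)+1 ∧ (i:ℕ) % 2 = p then 1 else 0

def chainM (m r p : ℕ) : Matrix (Fin (m+1)) (Fin (m+1)) ℂ :=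
  Matrix.of fun i j => if (j:ℕ) = (i:ℕ)+r ∧ (i:ℕ) % 2 = p then 1 else 0

lemma stepM_eq_chainM (m p : ℕ) : stepM m p = chainM m 1 p := rfl

lemma sum_delta (m v : ℕ) (f : Fin (m+1) → ℂ) :
    (∑ t : Fin (m+1), (if (t:ℕ) = v then (1:ℂ) else 0) * f t) =
      if hv : v < m+1 then f ⟨v, hv⟩ else 0 := by
  by_cases hv : v < m+1
  · rw [dif_pos hv]
    rw [Finset.sum_eq_single ⟨v, hv⟩]
    · simp
    · intro t _ ht
      rw [if_neg, zero_mul]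
      intro h
      exact ht (Fin.ext h)
    · intro h; exact absurd (Finset.mem_univ _) h
  · rw [dif_neg hv]
    refine Finset.sum_eq_zero fun t _ => ?_
    rw [if_neg, zero_mul]
    intro h
    exact hv (h ▸ t.isLt)

lemma stepM_mul_chainM (m r p q : ℕ) (hp : p < 2) (hq : q < 2) (hpq : p ≠ q) :
    stepM m p * chainM m r q = chainM m (r+1) p := by
  ext i j
  rw [Matrix.mul_apply]
  simp only [stepM, chainM, Matrix.of_apply]
  by_cases hip : (i:ℕ) % 2 = p
  · have e1 : ∀ t : Fin (m+1),
        (if (t:ℕ) = (i:ℕ)+1 ∧ (i:ℕ) % 2 = p then (1:ℂ) else 0) =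
        (if (t:ℕ) = (i:ℕ)+1 then (1:ℂ) else 0) := by
      intro t; simp [hip]
    simp only [e1]
    rw [sum_delta m ((i:ℕ)+1) (fun t => if (j:ℕ) = (t:ℕ)+r ∧ (t:ℕ) % 2 = q then (1:ℂ) else 0)]
    by_cases hi : (i:ℕ)+1 < m+1
    · rw [dif_pos hi]
      have hvv : (((⟨(i:ℕ)+1, hi⟩ : Fin (m+1)) : ℕ)) = (i:ℕ)+1 := rfl
      have : (((⟨(i:ℕ)+1, hi⟩ : Fin (m+1)) : ℕ)) % 2 = q := by rw [hvv]; omega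
      simp only [this, and_true, hip]
      rw [show (i:ℕ)+1+r = (i:ℕ)+(r+1) from by omega]
    · rw [dif_neg hi]
      rw [if_neg]
      rintro ⟨hj, -⟩
      have := j.isLt
      omega
  · rw [if_neg (by tauto)]
    refine Finset.sum_eq_zero fun t _ => ?_
    rw [if_neg (by tauto), zero_mul]

lemma stepM_sq (m p : ℕ) : stepM m p * stepM m p = 0 := by
  ext i j
  rw [Matrix.mul_apply]
  simp only [stepM, Matrix.of_apply, Matrix.zero_apply]
  refine Finset.sum_eq_zero fun t _ => ?_
  split_ifs with h1 h2 <;> first | (exfalso; omega) | simp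

def shiftM (m : ℕ) : Matrix (Fin (m+1)) (Fin (m+1)) ℂ :=
  Matrix.of fun i j => if (j:ℕ) = (i:ℕ)+1 then 1 else 0

lemma stepM_add (m : ℕ) : stepM m 0 + stepM m 1 = shiftM m := by
  ext i j
  simp only [stepM, shiftM, Matrix.add_apply, Matrix.of_apply]
  split_ifs <;> first | (exfalso; omega) | norm_num

lemma shiftM_pow (m : ℕ) : ∀ k : ℕ, shiftM m ^ k =
    Matrix.of fun (i j : Fin (m+1)) => if (j:ℕ) = (i:ℕ)+k then (1:ℂ) else 0 := by
  intro k
  induction k with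
  | zero =>
    ext i j
    simp only [pow_zero, Matrix.one_apply, Matrix.of_apply, add_zero]
    by_cases h : i = j
    · subst h; simp
    · rw [if_neg h, if_neg (fun hh => h (Fin.ext hh.symm))]
  | succ k ih =>
    rw [pow_succ', ih]
    ext i j
    rw [Matrix.mul_apply]
    simp only [shiftM, Matrix.of_apply]
    rw [sum_delta m ((i:ℕ)+1) (fun t => if (j:ℕ) = (t:ℕ)+k then (1:ℂ) else 0)]
    by_cases hi : (i:ℕ)+1 < m+1
    · rw [dif_pos hi]
      simp only []
      rw [show (i:ℕ)+1+k = (i:ℕ)+(k+1) from by omega]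
    · rw [dif_neg hi, if_neg]
      have := j.isLt
      omega

lemma aeval_of_sq_zero {A : Type*} [Ring A] [Algebra ℂ A] (Q : Polynomial ℂ)
    (hc0 : Q.coeff 0 = 0) (hd : 1 ≤ Q.natDegree) (W : A) (hW : W * W = 0) :
    Polynomial.aeval W Q = Q.coeff 1 • W := by
  have hWk : ∀ k, 2 ≤ k → W ^ k = 0 := by
    intro k hk
    obtain ⟨a, rfl⟩ : ∃ a, k = a + 2 := ⟨k - 2, by omega⟩
    rw [pow_succ, pow_succ, mul_assoc, hW, mul_zero]
  rw [Polynomial.aeval_eq_sum_range]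
  rw [Finset.sum_eq_single_of_mem 1 (Finset.mem_range.2 (by omega))]
  · rw [pow_one]
  · intro b _ hb
    rcases Nat.eq_zero_or_pos b with rfl | hbpos
    · rw [hc0, zero_smul]
    · rw [hWk b (by omega), smul_zero]

end Mat

section Extract

variable (P : ℕ → Polynomial ℂ)

lemma altList_mat (hdeg : ∀ n, (P n).natDegree = n) (hzero : ∀ n, 1 ≤ n → (P n).coeff 0 = 0)
    (m : ℕ) :
    ∀ (l : List ℕ) (_ : ∀ i ∈ l, 0 < i) (_ : l ≠ []) (p q : ℕ)
      (_ : p < 2) (_ : q < 2) (_ : p ≠ q),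
      altList P l (stepM m p) (stepM m q) =
        ((l.map fun i => (P i).coeff 1).prod) • chainM m l.length p := by
  intro l
  induction l with
  | nil => intro _ h; exact absurd rfl h
  | cons i t ih =>
    intro hl _ p q hp hq hpq
    have hi : 0 < i := hl i (by simp)
    have hstep : Polynomial.aeval (stepM m p) (P i) = (P i).coeff 1 • stepM m p :=
      aeval_of_sq_zero (P i) (hzero i hi) (by rw [hdeg i]; omega) _ (stepM_sq m p)
    rw [altList, hstep]
    cases t with
    | nil =>
      simp only [altList, mul_one, List.map_cons, List.map_nil, List.prod_cons, List.prod_nil,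
        List.length_cons, List.length_nil]
      rw [stepM_eq_chainM]
    | cons a s =>
      rw [ih (fun x hx => hl x (by simp [hx])) (by simp) q p hq hp (Ne.symm hpq)]
      rw [smul_mul_smul_comm]
      rw [stepM_mul_chainM m _ p q hp hq hpq]
      simp only [List.map_cons, List.prod_cons, List.length_cons]

lemma map_altList {A B : Type*} [Semiring A] [Algebra ℂ A] [Semiring B] [Algebra ℂ B]
    (f : A →ₐ[ℂ] B) : ∀ (l : List ℕ) (W V : A),
    f (altList P l W V) = altList P l (f W) (f V) := by
  intro l
  induction l with
  | nil => intro W V; simp [altList]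
  | cons i t ih =>
    intro W V
    rw [altList, altList, map_mul, ih, Polynomial.aeval_algHom_apply]

lemma extract (hdeg : ∀ n, (P n).natDegree = n) (hzero : ∀ n, 1 ≤ n → (P n).coeff 0 = 0)
    {n : ℕ} (hn : 1 ≤ n)
    (hid : Polynomial.aeval (Xg + Yg) (P n) =
      ∑ c : Composition n, (altProd P c Xg Yg + altProd P c Yg Xg))
    (m : ℕ) (hm : 1 ≤ m) :
    (if m ≤ n then (P n).coeff m else 0) =
      ∑ l ∈ compL n, (if l.length = m then (l.map fun i => (P i).coeff 1).prod else 0) := by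
  set A := Matrix (Fin (m+1)) (Fin (m+1)) ℂ
  set φ : FreeAlgebra ℂ Bool →ₐ[ℂ] A :=
    FreeAlgebra.lift ℂ (fun b : Bool => if b then stepM m 1 else stepM m 0) with hφ
  have hφX : φ Xg = stepM m 0 := by
    rw [Xg, hφ, FreeAlgebra.lift_ι_apply]; rfl
  have hφY : φ Yg = stepM m 1 := by
    rw [Yg, hφ, FreeAlgebra.lift_ι_apply]; rfl
  have hsum : (∑ c : Composition n, (altProd P c Xg Yg + altProd P c Yg Xg)) =
      ∑ l ∈ compL n, (altList P l Xg Yg + altList P l Yg Xg) := by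
    rw [← sum_composition (fun l => altList P l Xg Yg + altList P l Yg Xg) n]
    exact Finset.sum_congr rfl fun c _ => by rw [altProd_eq_altList, altProd_eq_altList]
  rw [hsum] at hid
  have hent := congrArg (fun M : A => M 0 (Fin.last m)) (congrArg φ hid)
  -- LHS of hent
  have hL : φ (Polynomial.aeval (Xg + Yg) (P n)) 0 (Fin.last m) =
      (if m ≤ n then (P n).coeff m else 0) := by
    rw [← Polynomial.aeval_algHom_apply, map_add, hφX, hφY, stepM_add]
    rw [Polynomial.aeval_eq_sum_range, hdeg]
    rw [Matrix.sum_apply]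
    have : ∀ k ∈ Finset.range (n+1),
        ((P n).coeff k • shiftM m ^ k) 0 (Fin.last m) =
        (if m = k then (P n).coeff k else 0) := by
      intro k _
      rw [shiftM_pow, Matrix.smul_apply, Matrix.of_apply]
      simp only [Fin.val_last, Fin.val_zero, zero_add, smul_eq_mul, mul_ite, mul_one, mul_zero]
    rw [Finset.sum_congr rfl this, Finset.sum_ite_eq (Finset.range (n+1)) m (fun k => (P n).coeff k)]
    simp [Finset.mem_range, Nat.lt_succ_iff]
  -- RHS of hent
  have hR : φ (∑ l ∈ compL n, (altList P l Xg Yg + altList P l Yg Xg)) 0 (Fin.last m) =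
      ∑ l ∈ compL n, (if l.length = m then (l.map fun i => (P i).coeff 1).prod else 0) := by
    rw [map_sum, Matrix.sum_apply]
    refine Finset.sum_congr rfl fun l hl => ?_
    obtain ⟨hls, hlp⟩ := (mem_compL n l).1 hl
    have hlne : l ≠ [] := by rintro rfl; simp at hls; omega
    rw [map_add, map_altList, map_altList, hφX, hφY]
    rw [altList_mat P hdeg hzero m l hlp hlne 0 1 (by omega) (by omega) (by omega)]
    rw [altList_mat P hdeg hzero m l hlp hlne 1 0 (by omega) (by omega) (by omega)]
    rw [Matrix.add_apply, Matrix.smul_apply, Matrix.smul_apply]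
    simp only [chainM, Matrix.of_apply, Fin.val_last, Fin.val_zero, zero_add, smul_eq_mul]
    norm_num
    split_ifs with h1 h2 h3 <;> first | (exfalso; omega) | simp [h1] | simp
  rw [hL, hR] at hent
  exact hent
end Extract

/-- the free binomial identity. A sequence of monic polynomials `P_n` of degree
`n` with `P_0 = 1` and `P_n(0) = 0` for `n ≥ 1` satisfies the free (noncommutative) binomial
expansion over all compositions of `n` if and only if its generating function equals
`1/(1 − u(z)x) = Σ_k x^k u(z)^k` for some `u ∈ 𝒫₀,₁`. -/
theorem stmt_15 (P : ℕ → Polynomial ℂ)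
    (hP0 : P 0 = 1)
    (hmonic : ∀ n, (P n).Monic) (hdeg : ∀ n, (P n).natDegree = n)
    (hzero : ∀ n, 1 ≤ n → (P n).coeff 0 = 0) :
    (∀ n, 1 ≤ n →
      Polynomial.aeval (FreeAlgebra.ι ℂ false + FreeAlgebra.ι ℂ true) (P n) =
        ∑ c : Composition n,
          (altProd P c (FreeAlgebra.ι ℂ false) (FreeAlgebra.ι ℂ true) +
           altProd P c (FreeAlgebra.ι ℂ true) (FreeAlgebra.ι ℂ false)))
    ↔
    (∃ u : PowerSeries ℂ,
      PowerSeries.constantCoeff u = 0 ∧ PowerSeries.coeff 1 u = 1 ∧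
      ∀ n : ℕ, P n = ∑ k ∈ Finset.range (n + 1),
        Polynomial.C (PowerSeries.coeff n (u ^ k)) * Polynomial.X ^ k) := by
  constructor
  · intro h
    set u : PowerSeries ℂ := PowerSeries.mk (fun i => if i = 0 then 0 else (P i).coeff 1) with hu
    have hu0 : PowerSeries.constantCoeff u = 0 := by
      rw [← PowerSeries.coeff_zero_eq_constantCoeff, hu, PowerSeries.coeff_mk, if_pos rfl]
    have hucoeff : ∀ i, 1 ≤ i → PowerSeries.coeff i u = (P i).coeff 1 := by
      intro i hi
      rw [hu, PowerSeries.coeff_mk, if_neg (by omega)]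
    refine ⟨u, hu0, ?_, ?_⟩
    · rw [hucoeff 1 le_rfl]
      have := (hmonic 1).coeff_natDegree
      rwa [hdeg 1] at this
    · intro n
      refine Polynomial.ext fun m => ?_
      rw [Polynomial.finset_sum_coeff]
      simp only [Polynomial.coeff_C_mul, Polynomial.coeff_X_pow, mul_ite, mul_one, mul_zero]
      rw [Finset.sum_ite_eq (Finset.range (n+1)) m (fun k => PowerSeries.coeff n (u ^ k))]
      simp only [Finset.mem_range]
      by_cases hmn : m < n + 1
      · rw [if_pos hmn]
        rcases Nat.eq_zero_or_pos n with rfl | hn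
        · interval_cases m
          rw [hP0, pow_zero]
          simp
        · rcases Nat.eq_zero_or_pos m with rfl | hm
          · rw [hzero n hn, pow_zero, PowerSeries.coeff_one, if_neg (by omega)]
          · have he := extract P hdeg hzero hn (h n hn) m hm
            rw [if_pos (by omega)] at he
            rw [he, coeff_pow_compL hu0 n m]
            refine Finset.sum_congr rfl fun l hl => ?_
            obtain ⟨-, hlp⟩ := (mem_compL n l).1 hl
            congr 1
            refine congrArg List.prod (List.map_congr_left fun a ha => ?_)
            exact (hucoeff a (hlp a ha)).symm
      · rw [if_neg hmn]
        exact Polynomial.coeff_eq_zero_of_natDegree_lt (by rw [hdeg]; omega)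
  · rintro ⟨u, h0, h1, hcoeff⟩ n hn
    exact dir2 P hP0 u h0 hcoeff n hn
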